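/- Under the dissipativity assumption Re Q_t ≤ 0 (negative semidefinite) for all t, the resolvent R(t,τ) of d/dt R = 2iF_t R, R(τ,τ) = I, with F_t = σQ_t, is non-negative: for all 0 ≤ τ ≤ t ≤ T and all X ∈ ℂ^{2n}, i(σ(conj(R(t,τ)X), R(t,τ)X) - σ(conj(X), X)) ≥ 0 (this quantity is real and non-negative). -/

import Mathlib

open Matrix
open scoped ComplexOrder

attribute [local instance] Matrix.normedAddCommGroup Matrix.normedSpace

/-- The standard symplectic matrix `[[0, Iₙ], [-Iₙ, 0]]`. -/
noncomputable def sympMat (n : ℕ) : Matrix (Fin n ⊕ Fin n) (Fin n ⊕ Fin n) ℂ :=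
  Matrix.fromBlocks 0 1 (-1) 0

/-- The standard symplectic bilinear form `σ((x,ξ),(y,η)) = ⟨ξ,y⟩ - ⟨x,η⟩` on `ℂ^{2n}`. -/
noncomputable def sympForm (n : ℕ) (X Y : Fin n ⊕ Fin n → ℂ) : ℂ :=
  (sympMat n *ᵥ X) ⬝ᵥ Y

lemma sympMat_star_apply (n : ℕ) (i j : Fin n ⊕ Fin n) :
    star (sympMat n i j) = sympMat n i j := by
  rcases i with i | i <;> rcases j with j | j <;>
    simp [sympMat, Matrix.fromBlocks, Matrix.one_apply, apply_ite]

lemma sympMat_transpose (n : ℕ) : (sympMat n)ᵀ = -(sympMat n) := by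
  rw [sympMat, Matrix.fromBlocks_transpose, Matrix.fromBlocks_neg]
  simp

lemma sympMat_mul_self (n : ℕ) : sympMat n * sympMat n = -1 := by
  rw [sympMat, Matrix.fromBlocks_multiply, ← Matrix.fromBlocks_one (l := Fin n) (m := Fin n), Matrix.fromBlocks_neg]
  congr 1 <;> simp

lemma sympMat_mulVec_star (n : ℕ) (v : Fin n ⊕ Fin n → ℂ) :
    star (sympMat n *ᵥ v) = sympMat n *ᵥ star v := by
  funext i
  simp only [Pi.star_apply, Matrix.mulVec, dotProduct, star_sum, star_mul']
  refine Finset.sum_congr rfl fun j _ => ?_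
  rw [sympMat_star_apply, mul_comm]

lemma sympForm_im_zero (n : ℕ) (Y : Fin n ⊕ Fin n → ℂ) :
    (Complex.I * ((sympMat n *ᵥ star Y) ⬝ᵥ Y)).im = 0 := by
  set w : ℂ := (sympMat n *ᵥ star Y) ⬝ᵥ Y with hw
  have hstar : star w = -w := by
    have h1 : star w = star (sympMat n *ᵥ star Y) ⬝ᵥ star Y := by
      rw [hw, dotProduct_comm, ← Matrix.star_dotProduct_star]
    rw [sympMat_mulVec_star, star_star] at h1
    have h2 : (sympMat n *ᵥ Y) ⬝ᵥ star Y = (star Y ᵥ* sympMat n) ⬝ᵥ Y := by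
      rw [dotProduct_comm, Matrix.dotProduct_mulVec]
    have h3 : star Y ᵥ* sympMat n = -(sympMat n *ᵥ star Y) := by
      have h4 := Matrix.vecMul_transpose (sympMat n) (star Y)
      rw [sympMat_transpose] at h4
      have h5 : sympMat n *ᵥ star Y = -(star Y ᵥ* sympMat n) := by
        simpa [Matrix.vecMul_neg] using h4.symm
      rw [h5, neg_neg]
    rw [h1, h2, h3, neg_dotProduct, hw]
  have : w.re = 0 := by
    have := congrArg Complex.re hstar
    simp at this
    linarith
  simp [Complex.mul_im, this]

lemma quad_re_nonpos (n : ℕ) (Q : Matrix (Fin n ⊕ Fin n) (Fin n ⊕ Fin n) ℂ)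
    (hsymm : Q.IsSymm)
    (h : ∀ X : Fin n ⊕ Fin n → ℝ,
      ((fun i => (X i : ℂ)) ⬝ᵥ (Q *ᵥ fun i => (X i : ℂ))).re ≤ 0)
    (Y : Fin n ⊕ Fin n → ℂ) : (star Y ⬝ᵥ (Q *ᵥ Y)).re ≤ 0 := by
  set a : Fin n ⊕ Fin n → ℂ := fun i => ((Y i).re : ℂ) with ha
  set b : Fin n ⊕ Fin n → ℂ := fun i => ((Y i).im : ℂ) with hb
  have hY : Y = a + Complex.I • b := by
    funext i; simp [ha, hb, Complex.ext_iff]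
  have hsY : star Y = a - Complex.I • b := by
    funext i; simp [ha, hb, Complex.ext_iff]
  have hcross : b ⬝ᵥ (Q *ᵥ a) = a ⬝ᵥ (Q *ᵥ b) := by
    rw [Matrix.dotProduct_mulVec]
    have : b ᵥ* Q = Q *ᵥ b := by
      conv_lhs => rw [← hsymm.eq]
      exact Matrix.vecMul_transpose Q b
    rw [this, dotProduct_comm]
  have expand : star Y ⬝ᵥ (Q *ᵥ Y) = a ⬝ᵥ (Q *ᵥ a) + b ⬝ᵥ (Q *ᵥ b) := by
    rw [hsY]; conv_lhs => rw [hY]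
    rw [Matrix.mulVec_add, Matrix.mulVec_smul, sub_dotProduct,
      dotProduct_add, dotProduct_add, smul_dotProduct,
      smul_dotProduct, dotProduct_smul, dotProduct_smul,
      hcross]
    simp only [smul_eq_mul]
    ring_nf
    rw [Complex.I_sq]
    ring
  rw [expand]
  have h1 := h (fun i => (Y i).re)
  have h2 := h (fun i => (Y i).im)
  simp only [Complex.add_re]
  have e1 : a ⬝ᵥ (Q *ᵥ a) = (fun i => (((Y i).re : ℝ) : ℂ)) ⬝ᵥ (Q *ᵥ fun i => (((Y i).re : ℝ) : ℂ)) := rfl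
  have e2 : b ⬝ᵥ (Q *ᵥ b) = (fun i => (((Y i).im : ℝ) : ℂ)) ⬝ᵥ (Q *ᵥ fun i => (((Y i).im : ℝ) : ℂ)) := rfl
  rw [e1, e2]
  linarith

lemma deriv_re_eq (n : ℕ) (Q : Matrix (Fin n ⊕ Fin n) (Fin n ⊕ Fin n) ℂ)
    (Y : Fin n ⊕ Fin n → ℂ) :
    (Complex.I * ((sympMat n *ᵥ star ((2 * Complex.I) • (sympMat n *ᵥ (Q *ᵥ Y)))) ⬝ᵥ Y
      + (sympMat n *ᵥ star Y) ⬝ᵥ ((2 * Complex.I) • (sympMat n *ᵥ (Q *ᵥ Y))))).re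
    = -(4 * (star Y ⬝ᵥ (Q *ᵥ Y)).re) := by
  set z : ℂ := star Y ⬝ᵥ (Q *ᵥ Y) with hz
  have hstar : star ((2 * Complex.I) • (sympMat n *ᵥ (Q *ᵥ Y)))
      = (-(2 * Complex.I)) • (sympMat n *ᵥ star (Q *ᵥ Y)) := by
    rw [star_smul, sympMat_mulVec_star]
    congr 1
    simp [Complex.star_def]
  have t1 : (sympMat n *ᵥ ((-(2 * Complex.I)) • (sympMat n *ᵥ star (Q *ᵥ Y)))) ⬝ᵥ Y
      = (2 * Complex.I) * star z := by
    rw [Matrix.mulVec_smul, Matrix.mulVec_mulVec, sympMat_mul_self, smul_dotProduct]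
    have : star (Q *ᵥ Y) ⬝ᵥ Y = star z := by
      rw [hz, Matrix.star_dotProduct]
    rw [Matrix.neg_mulVec, Matrix.one_mulVec, neg_dotProduct, this]
    simp
  have t2 : (sympMat n *ᵥ star Y) ⬝ᵥ ((2 * Complex.I) • (sympMat n *ᵥ (Q *ᵥ Y)))
      = (2 * Complex.I) * z := by
    rw [dotProduct_smul]
    have h1 : sympMat n *ᵥ star Y = star Y ᵥ* (sympMat n)ᵀ := (Matrix.vecMul_transpose _ _).symm
    rw [h1, Matrix.dotProduct_mulVec, Matrix.vecMul_vecMul, sympMat_transpose,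
      Matrix.neg_mul, sympMat_mul_self, neg_neg, Matrix.vecMul_one]
    simp [hz]
  rw [hstar, t1, t2]
  have : Complex.I * (2 * Complex.I * star z + 2 * Complex.I * z) = -2 * (star z + z) := by
    ring_nf
    rw [Complex.I_sq]
    ring
  rw [this]
  simp [Complex.add_re]
  ring

noncomputable def mulVecCLM (n : ℕ) (X : Fin n ⊕ Fin n → ℂ) :
    Matrix (Fin n ⊕ Fin n) (Fin n ⊕ Fin n) ℂ →L[ℂ] (Fin n ⊕ Fin n → ℂ) :=
  LinearMap.toContinuousLinearMap
    { toFun := fun M => M *ᵥ X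
      map_add' := fun A B => Matrix.add_mulVec A B X
      map_smul' := fun c M => Matrix.smul_mulVec c M X }

/-- Under the dissipativity assumption `Re Q_t ≤ 0`, the resolvent of
`d/dt R = 2iF_t R`, `R(τ,τ) = I`, with `F_t = σQ_t`, is non-negative:
for `0 ≤ τ ≤ t ≤ T` and all `X ∈ ℂ^{2n}`,
`i(σ(conj(R(t,τ)X), R(t,τ)X) - σ(conj X, X))` is a non-negative real number. -/
theorem resolvent_nonneg (n : ℕ) (T : ℝ) (hT : 0 < T)
    (Q : ℝ → Matrix (Fin n ⊕ Fin n) (Fin n ⊕ Fin n) ℂ)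
    (hQsymm : ∀ t ∈ Set.Icc (0 : ℝ) T, (Q t).IsSymm)
    (hQcont : ContinuousOn Q (Set.Icc (0 : ℝ) T))
    (hQRe : ∀ t ∈ Set.Icc (0 : ℝ) T, ∀ X : Fin n ⊕ Fin n → ℝ,
      ((fun i => (X i : ℂ)) ⬝ᵥ (Q t *ᵥ fun i => (X i : ℂ))).re ≤ 0)
    (R : ℝ → ℝ → Matrix (Fin n ⊕ Fin n) (Fin n ⊕ Fin n) ℂ)
    (hR : ∀ τ ∈ Set.Icc (0 : ℝ) T, ∀ t ∈ Set.Icc (0 : ℝ) T,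
      HasDerivAt (fun s => R s τ) ((2 * Complex.I) • (sympMat n * Q t * R t τ)) t)
    (hRinit : ∀ τ ∈ Set.Icc (0 : ℝ) T, R τ τ = 1) :
    ∀ τ t : ℝ, 0 ≤ τ → τ ≤ t → t ≤ T → ∀ X : Fin n ⊕ Fin n → ℂ,
      0 ≤ Complex.I * (sympForm n (star (R t τ *ᵥ X)) (R t τ *ᵥ X)
            - sympForm n (star X) X) := by
  intro τ t hτ0 hτt htT X
  have hτT : τ ≤ T := le_trans hτt htT
  have hτmem : τ ∈ Set.Icc (0:ℝ) T := ⟨hτ0, hτT⟩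
  have htmem : t ∈ Set.Icc (0:ℝ) T := ⟨le_trans hτ0 hτt, htT⟩
  set Y : ℝ → (Fin n ⊕ Fin n → ℂ) := fun s => R s τ *ᵥ X with hYdef
  set g : ℝ → ℂ := fun s => Complex.I * ((sympMat n *ᵥ star (Y s)) ⬝ᵥ Y s) with hgdef
  set Dv : ℝ → (Fin n ⊕ Fin n → ℂ) :=
    fun s => (2 * Complex.I) • (sympMat n *ᵥ (Q s *ᵥ Y s)) with hDvdef
  -- derivative of Y
  have hYderiv : ∀ s ∈ Set.Icc (0:ℝ) T, HasDerivAt Y (Dv s) s := by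
    intro s hs
    have h1 := hR τ hτmem s hs
    have h2 := ((mulVecCLM n X).restrictScalars ℝ).hasFDerivAt.comp_hasDerivAt s h1
    have he : (fun u => ((mulVecCLM n X).restrictScalars ℝ) (R u τ)) = Y := rfl
    have hv : ((mulVecCLM n X).restrictScalars ℝ)
        ((2 * Complex.I) • (sympMat n * Q s * R s τ)) = Dv s := by
      show ((2 * Complex.I) • (sympMat n * Q s * R s τ)) *ᵥ X = Dv s
      rw [Matrix.smul_mulVec, hDvdef]
      congr 1
      rw [← Matrix.mulVec_mulVec, ← Matrix.mulVec_mulVec]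
    rw [← he, ← hv]
    exact h2
  -- derivative of g
  have hgderiv : ∀ s ∈ Set.Icc (0:ℝ) T,
      HasDerivAt g (Complex.I * ((sympMat n *ᵥ star (Dv s)) ⬝ᵥ Y s
        + (sympMat n *ᵥ star (Y s)) ⬝ᵥ Dv s)) s := by
    intro s hs
    have hY := hYderiv s hs
    have hYi : ∀ i, HasDerivAt (fun u => Y u i) (Dv s i) s :=
      fun i => hasDerivAt_pi.1 hY i
    have hsum : HasDerivAt (fun u => ∑ i, (∑ j, sympMat n i j * star (Y u j)) * Y u i)
        (∑ i, ((∑ j, sympMat n i j * star (Dv s j)) * Y s i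
          + (∑ j, sympMat n i j * star (Y s j)) * Dv s i)) s := by
      refine HasDerivAt.fun_sum fun i _ => ?_
      exact (HasDerivAt.fun_sum fun j _ => ((hYi j).star.const_mul (sympMat n i j))).mul (hYi i)
    have hg' := hsum.const_mul Complex.I
    have e1 : (fun u => Complex.I * ∑ i, (∑ j, sympMat n i j * star (Y u j)) * Y u i) = g := by
      funext u
      simp [hgdef, dotProduct, Matrix.mulVec, Pi.star_apply]
    have e2 : Complex.I * (∑ i, ((∑ j, sympMat n i j * star (Dv s j)) * Y s i
          + (∑ j, sympMat n i j * star (Y s j)) * Dv s i))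
        = Complex.I * ((sympMat n *ᵥ star (Dv s)) ⬝ᵥ Y s
          + (sympMat n *ᵥ star (Y s)) ⬝ᵥ Dv s) := by
      simp [dotProduct, Matrix.mulVec, Pi.star_apply, Finset.sum_add_distrib]
    rw [e1, e2] at hg'
    exact hg'
  -- derivative nonneg
  have hre : ∀ s ∈ Set.Icc (0:ℝ) T,
      0 ≤ (Complex.I * ((sympMat n *ᵥ star (Dv s)) ⬝ᵥ Y s
        + (sympMat n *ᵥ star (Y s)) ⬝ᵥ Dv s)).re := by
    intro s hs
    have hB := deriv_re_eq n (Q s) (Y s)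
    have hC := quad_re_nonpos n (Q s) (hQsymm s hs) (hQRe s hs) (Y s)
    rw [hDvdef]
    simp only []
    rw [hB]
    linarith
  -- monotone real part
  set h : ℝ → ℝ := fun s => (g s).re with hhdef
  have hhD : ∀ s ∈ Set.Icc (0:ℝ) T,
      HasDerivAt h ((Complex.I * ((sympMat n *ᵥ star (Dv s)) ⬝ᵥ Y s
        + (sympMat n *ᵥ star (Y s)) ⬝ᵥ Dv s)).re) s := by
    intro s hs
    exact Complex.reCLM.hasFDerivAt.comp_hasDerivAt s (hgderiv s hs)
  have hsub : Set.Icc τ t ⊆ Set.Icc (0:ℝ) T :=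
    Set.Icc_subset_Icc hτ0 htT
  have hmono : MonotoneOn h (Set.Icc τ t) := by
    apply monotoneOn_of_deriv_nonneg (convex_Icc τ t)
    · intro s hs
      exact ((hhD s (hsub hs)).continuousAt).continuousWithinAt
    · intro s hs
      exact ((hhD s (hsub (interior_subset hs))).differentiableAt).differentiableWithinAt
    · intro s hs
      rw [(hhD s (hsub (interior_subset hs))).deriv]
      exact hre s (hsub (interior_subset hs))
  have hmain : h τ ≤ h t :=
    hmono ⟨le_refl τ, hτt⟩ ⟨hτt, le_refl t⟩ hτt
  -- assemble
  have hgτ : g τ = Complex.I * sympForm n (star X) X := by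
    rw [hgdef]
    simp only [hYdef]
    rw [hRinit τ hτmem, Matrix.one_mulVec]
    rfl
  have hgt : g t = Complex.I * sympForm n (star (R t τ *ᵥ X)) (R t τ *ᵥ X) := rfl
  have himτ : (g τ).im = 0 := sympForm_im_zero n (Y τ)
  have himt : (g t).im = 0 := sympForm_im_zero n (Y t)
  have key : Complex.I * (sympForm n (star (R t τ *ᵥ X)) (R t τ *ᵥ X)
      - sympForm n (star X) X) = g t - g τ := by
    rw [hgt, hgτ]; ring
  rw [key, Complex.le_def]
  constructor
  · simpa [Complex.sub_re] using sub_nonneg.mpr hmain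
  · simp [Complex.sub_im, himτ, himt]
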